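/- Let r, r* ∈ ℝ₊ⁿ be nonnegative vectors and b ∈ [0, C_Ω]ⁿ with components bᵢ ∈ [0, C_Ω]. Set KL(r|r*) = Σᵢ [rᵢ log(rᵢ/rᵢ*) − rᵢ + rᵢ*]. Then Σᵢ rᵢ* bᵢ ≤ 3·Σᵢ rᵢ bᵢ + 2·C_Ω·KL(r | r*). -/

import Mathlib

lemma kl_aux (u v : ℝ) (hu : 0 ≤ u) (hv : 0 ≤ v) (hcv : 0 < v ∨ u = 0) :
    0 ≤ u * Real.log (u / v) - u + v ∧
      v - 3 * u ≤ 2 * (u * Real.log (u / v) - u + v) := by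
  rcases eq_or_lt_of_le hu with h0 | hu'
  · simp [← h0]
    constructor <;> linarith
  · rcases hcv with hv' | h0
    swap
    · exfalso; linarith
    set a := Real.sqrt u with ha
    set c := Real.sqrt v with hc
    have hA : 0 < a := Real.sqrt_pos.2 hu'
    have hCpos : 0 < c := Real.sqrt_pos.2 hv'
    have hua : u = a ^ 2 := (Real.sq_sqrt hu).symm
    have hvc : v = c ^ 2 := (Real.sq_sqrt hv).symm
    have hlog : Real.log (u / v) = 2 * (Real.log a - Real.log c) := by
      rw [Real.log_div (ne_of_gt hu') (ne_of_gt hv'), ha, hc,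
        Real.log_sqrt hu, Real.log_sqrt hv]; ring
    have h1 : Real.log (c / a) ≤ c / a - 1 :=
      Real.log_le_sub_one_of_pos (div_pos hCpos hA)
    have h2 : Real.log (c / a) = Real.log c - Real.log a :=
      Real.log_div (ne_of_gt hCpos) (ne_of_gt hA)
    have hkey : 1 - c / a ≤ Real.log a - Real.log c := by linarith
    -- u * log(u/v) ≥ 2u(1 - c/a) = 2a² - 2ac
    have h3 : 2 * a ^ 2 - 2 * a * c ≤ u * Real.log (u / v) := by
      rw [hlog, hua]
      have := mul_le_mul_of_nonneg_left hkey (by positivity : (0:ℝ) ≤ 2 * a ^ 2)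
      calc 2 * a ^ 2 - 2 * a * c = 2 * a ^ 2 * (1 - c / a) := by
            field_simp
        _ ≤ 2 * a ^ 2 * (Real.log a - Real.log c) := this
        _ = a ^ 2 * (2 * (Real.log a - Real.log c)) := by ring
    constructor
    · nlinarith [sq_nonneg (a - c)]
    · nlinarith [sq_nonneg (2 * a - c)]

/-- Weighted-Pinsker transfer lemma: for nonnegative vectors `r, r*` and
weights `b` with `0 ≤ bᵢ ≤ C_Ω`, with the discrete unnormalized KL
divergence `KL(r | r*) = Σᵢ [rᵢ log(rᵢ/rᵢ*) − rᵢ + rᵢ*]`, one has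
`Σᵢ rᵢ* bᵢ ≤ 3·Σᵢ rᵢ bᵢ + 2·C_Ω·KL(r | r*)`.  (The hypothesis
`0 < rᵢ* ∨ rᵢ = 0` records the convention that `KL` is `+∞` when
`rᵢ* = 0 < rᵢ`, making the claim trivial in that case.) -/
theorem stmt11 {n : ℕ} (CΩ : ℝ) (hC : 0 ≤ CΩ)
    (r rs b : Fin n → ℝ)
    (hr : ∀ i, 0 ≤ r i) (hrs : ∀ i, 0 ≤ rs i)
    (hconv : ∀ i, 0 < rs i ∨ r i = 0)
    (hb : ∀ i, 0 ≤ b i ∧ b i ≤ CΩ) :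
    ∑ i, rs i * b i
      ≤ 3 * ∑ i, r i * b i
        + 2 * CΩ * ∑ i, (r i * Real.log (r i / rs i) - r i + rs i) := by
  rw [Finset.mul_sum, Finset.mul_sum, ← Finset.sum_add_distrib]
  apply Finset.sum_le_sum
  intro i _
  obtain ⟨hkl0, hkl⟩ := kl_aux (r i) (rs i) (hr i) (hrs i) (hconv i)
  obtain ⟨hb0, hbC⟩ := hb i
  set K := r i * Real.log (r i / rs i) - r i + rs i
  rcases le_or_gt (rs i - 3 * r i) 0 with h | h
  · nlinarith
  · nlinarith [mul_le_mul_of_nonneg_left hbC (le_of_lt h)]
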